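/- For every n ≥ 2: p_n(x) = ξ_{n,n} p_n^{[2]}(x) + ξ_{n−1,n} p_{n−1}^{[2]}(x) + ξ_{n−2,n} p_{n−2}^{[2]}(x), where ξ_{n,n} = r_n/r_n^{[2]} = (r_n/r_{n+1})·(K_{n+1}(c,c)/K_n(c,c))^{1/2} = e_n^{1/2}, ξ_{n−1,n} = −d_{n−1}·(K_{n−1}(c,c)/K_n(c,c))^{1/2}, and ξ_{n−2,n} = (r_{n−1}/r_n)·(K_{n−2}(c,c)/K_{n−1}(c,c))^{1/2}. -/

import Mathlib

open MeasureTheory Polynomial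

/-- Squared norm `‖Q‖_μ² = ∫ Q(x)² dμ`. -/
noncomputable def nrmSq (μ : Measure ℝ) (Q : Polynomial ℝ) : ℝ := ∫ x, Q.eval x ^ 2 ∂μ

/-- Squared norm in the 2-iterated Christoffel measure `(x-c)² dμ`. -/
noncomputable def nrmSq2 (μ : Measure ℝ) (c : ℝ) (Q : Polynomial ℝ) : ℝ :=
  ∫ x, Q.eval x ^ 2 * (x - c) ^ 2 ∂μ

/-- Sobolev-type inner product `⟨f,g⟩_S = ∫ f g dμ + M f(c) g(c) + N f'(c) g'(c)`. -/
noncomputable def ipS (μ : Measure ℝ) (c M N : ℝ) (f g : Polynomial ℝ) : ℝ :=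
  (∫ x, f.eval x * g.eval x ∂μ) + M * (f.eval c * g.eval c)
    + N * ((derivative f).eval c * (derivative g).eval c)

/-- Leading coefficient `r_n = 1/‖P_n‖_μ` of the orthonormal polynomial `p_n`. -/
noncomputable def rC (μ : Measure ℝ) (P : ℕ → Polynomial ℝ) (n : ℕ) : ℝ :=
  1 / Real.sqrt (nrmSq μ (P n))

/-- Leading coefficient `r_n^{[2]} = 1/‖P_n^{[2]}‖_{[2]}`. -/
noncomputable def r2C (μ : Measure ℝ) (c : ℝ) (P2 : ℕ → Polynomial ℝ) (n : ℕ) : ℝ :=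
  1 / Real.sqrt (nrmSq2 μ c (P2 n))

/-- Orthonormal polynomial `p_n = P_n/‖P_n‖_μ`. -/
noncomputable def onP (μ : Measure ℝ) (P : ℕ → Polynomial ℝ) (n : ℕ) : Polynomial ℝ :=
  C (rC μ P n) * P n

/-- Orthonormal polynomial `p_n^{[2]} = P_n^{[2]}/‖P_n^{[2]}‖_{[2]}`. -/
noncomputable def onP2 (μ : Measure ℝ) (c : ℝ) (P2 : ℕ → Polynomial ℝ) (n : ℕ) : Polynomial ℝ :=
  C (r2C μ c P2 n) * P2 n

/-- Leading coefficient `t_n = 1/‖S_n^{M,N}‖_S` of the Sobolev-type orthonormal polynomial. -/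
noncomputable def tC (μ : Measure ℝ) (c M N : ℝ) (S : ℕ → Polynomial ℝ) (n : ℕ) : ℝ :=
  1 / Real.sqrt (ipS μ c M N (S n) (S n))

/-- Sobolev-type orthonormal polynomial `s_n^{M,N} = S_n^{M,N}/‖S_n^{M,N}‖_S`. -/
noncomputable def sN (μ : Measure ℝ) (c M N : ℝ) (S : ℕ → Polynomial ℝ) (n : ℕ) : Polynomial ℝ :=
  C (tC μ c M N S n) * S n

/-- Diagonal kernel value `K_n(c,c) = Σ_{j=0}^n P_j(c)²/‖P_j‖_μ²`. -/
noncomputable def Kcc (μ : Measure ℝ) (P : ℕ → Polynomial ℝ) (c : ℝ) (n : ℕ) : ℝ :=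
  ∑ j ∈ Finset.range (n + 1), (P j).eval c ^ 2 / nrmSq μ (P j)

/-- Kernel `K_n^{(0,j)}(x,c)` as a polynomial in `x`:
`Σ_{k=0}^n (d/dy)^j P_k(y)|_{y=c} · P_k(x)/‖P_k‖_μ²`. -/
noncomputable def Kpoly (μ : Measure ℝ) (P : ℕ → Polynomial ℝ) (c : ℝ) (n j : ℕ) : Polynomial ℝ :=
  ∑ k ∈ Finset.range (n + 1), C ((derivative^[j] (P k)).eval c / nrmSq μ (P k)) * P k

/-- Mixed derivative of the kernel at the diagonal:
`K_n^{(i,j)}(c,c) = Σ_{k=0}^n P_k^{(i)}(c) P_k^{(j)}(c)/‖P_k‖_μ²`. -/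
noncomputable def Kder (μ : Measure ℝ) (P : ℕ → Polynomial ℝ) (c : ℝ) (n i j : ℕ) : ℝ :=
  ∑ k ∈ Finset.range (n + 1),
    (derivative^[i] (P k)).eval c * (derivative^[j] (P k)).eval c / nrmSq μ (P k)

/-- Connection coefficient `d_n`. -/
noncomputable def dCoef (P : ℕ → Polynomial ℝ) (c : ℝ) (n : ℕ) : ℝ :=
  ((P (n + 2)).eval c * (derivative (P n)).eval c
      - (derivative (P (n + 2))).eval c * (P n).eval c) /
    ((P (n + 1)).eval c * (derivative (P n)).eval c
      - (derivative (P (n + 1))).eval c * (P n).eval c)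

/-- Connection coefficient `e_n`. -/
noncomputable def eCoef (P : ℕ → Polynomial ℝ) (c : ℝ) (n : ℕ) : ℝ :=
  ((P (n + 2)).eval c * (derivative (P (n + 1))).eval c
      - (derivative (P (n + 2))).eval c * (P (n + 1)).eval c) /
    ((P (n + 1)).eval c * (derivative (P n)).eval c
      - (derivative (P (n + 1))).eval c * (P n).eval c)

/-- Connection coefficient `γ_{j,n} = ⟨s_n^{M,N}, p_j^{[2]}⟩_{[2]}`. -/
noncomputable def gamC (μ : Measure ℝ) (c M N : ℝ) (S P2 : ℕ → Polynomial ℝ) (j n : ℕ) : ℝ :=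
  ∫ x, (sN μ c M N S n).eval x * (onP2 μ c P2 j).eval x * (x - c) ^ 2 ∂μ

/-- Jacobi matrix of `μ`: `J(n,m) = ∫ x p_n(x) p_m(x) dμ`. -/
noncomputable def Jmat (μ : Measure ℝ) (P : ℕ → Polynomial ℝ) (n m : ℕ) : ℝ :=
  ∫ x, x * ((onP μ P n).eval x * (onP μ P m).eval x) ∂μ

/-- Jacobi matrix of `(x-c)² dμ`: `J_{[2]}(n,m) = ∫ x p_n^{[2]}(x) p_m^{[2]}(x) (x-c)² dμ`. -/
noncomputable def J2mat (μ : Measure ℝ) (c : ℝ) (P2 : ℕ → Polynomial ℝ) (n m : ℕ) : ℝ :=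
  ∫ x, x * ((onP2 μ c P2 n).eval x * (onP2 μ c P2 m).eval x) * (x - c) ^ 2 ∂μ

/-- Five-diagonal matrix `H(n,m) = ⟨(x-c)² s_n^{M,N}, s_m^{M,N}⟩_S`. -/
noncomputable def Hmat (μ : Measure ℝ) (c M N : ℝ) (S : ℕ → Polynomial ℝ) (n m : ℕ) : ℝ :=
  ipS μ c M N ((X - C c) ^ 2 * sN μ c M N S n) (sN μ c M N S m)

/-- Kronecker delta. -/
noncomputable def kdel (n m : ℕ) : ℝ := if n = m then 1 else 0


noncomputable def Imu (μ : Measure ℝ) (q : Polynomial ℝ) : ℝ := ∫ x, q.eval x ∂μ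

theorem integrable_polyEval {μ : Measure ℝ}
    (hmom : ∀ n : ℕ, Integrable (fun x : ℝ => x ^ n) μ)
    (q : Polynomial ℝ) : Integrable (fun x => q.eval x) μ := by
  have h : (fun x : ℝ => q.eval x)
      = fun x => ∑ i ∈ Finset.range (q.natDegree + 1), q.coeff i * x ^ i := by
    funext x; exact q.eval_eq_sum_range x
  rw [h]
  exact integrable_finset_sum _ fun i _ => (hmom i).const_mul _

section Imu
variable {μ : Measure ℝ}

theorem Imu_add (hmom : ∀ n : ℕ, Integrable (fun x : ℝ => x ^ n) μ) (p q : Polynomial ℝ) : Imu μ (p + q) = Imu μ p + Imu μ q := by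
  simp only [Imu, eval_add]
  exact integral_add (integrable_polyEval hmom p) (integrable_polyEval hmom q)

theorem Imu_Cmul (a : ℝ) (q : Polynomial ℝ) : Imu μ (C a * q) = a * Imu μ q := by
  simp only [Imu, eval_mul, eval_C]
  exact integral_const_mul a _

theorem Imu_neg (q : Polynomial ℝ) : Imu μ (-q) = - Imu μ q := by
  simp [Imu, integral_neg]

theorem Imu_sub (hmom : ∀ n : ℕ, Integrable (fun x : ℝ => x ^ n) μ) (p q : Polynomial ℝ) : Imu μ (p - q) = Imu μ p - Imu μ q := by
  rw [sub_eq_add_neg, Imu_add hmom, Imu_neg, sub_eq_add_neg]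

theorem Imu_sum (hmom : ∀ n : ℕ, Integrable (fun x : ℝ => x ^ n) μ) {ι : Type*} (s : Finset ι) (F : ι → Polynomial ℝ) :
    Imu μ (∑ i ∈ s, F i) = ∑ i ∈ s, Imu μ (F i) := by
  simp only [Imu, eval_finset_sum]
  exact integral_finset_sum s fun i _ => integrable_polyEval hmom (F i)

end Imu

theorem monic_rep (Q : ℕ → Polynomial ℝ) (hm : ∀ n, (Q n).Monic)
    (hd : ∀ n, (Q n).natDegree = n) :
    ∀ k (q : Polynomial ℝ), q.natDegree ≤ k →
      ∃ f : ℕ → ℝ, q = ∑ j ∈ Finset.range (k + 1), C (f j) * Q j := by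
  intro k
  induction k with
  | zero =>
    intro q hq
    refine ⟨fun _ => q.coeff 0, ?_⟩
    have h0 : Q 0 = 1 := (hm 0).natDegree_eq_zero.mp (hd 0)
    rw [Polynomial.eq_C_of_natDegree_le_zero hq]
    simp [h0]
  | succ k ih =>
    intro q hq
    set a := q.coeff (k + 1) with ha
    have hq' : (q - C a * Q (k + 1)).natDegree ≤ k := by
      rw [Polynomial.natDegree_le_iff_coeff_eq_zero]
      intro m hm'
      rcases eq_or_lt_of_le (Nat.succ_le_of_lt hm') with h | h
      · simp only [Polynomial.coeff_sub, Polynomial.coeff_C_mul, ← h]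
        have : (Q (k + 1)).coeff (k + 1) = 1 := by
          have := (hm (k + 1)).coeff_natDegree
          rwa [hd (k + 1)] at this
        rw [this, mul_one, sub_self]
      · have h1 : q.coeff m = 0 :=
          Polynomial.coeff_eq_zero_of_natDegree_lt (lt_of_le_of_lt hq h)
        have h2 : (Q (k + 1)).coeff m = 0 := by
          apply Polynomial.coeff_eq_zero_of_natDegree_lt
          rw [hd (k + 1)]; exact h
        simp [h1, h2]
    obtain ⟨f, hf⟩ := ih _ hq'
    refine ⟨fun j => if j = k + 1 then a else f j, ?_⟩
    rw [Finset.sum_range_succ]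
    have : ∑ j ∈ Finset.range (k + 1),
        C (if j = k + 1 then a else f j) * Q j
        = ∑ j ∈ Finset.range (k + 1), C (f j) * Q j := by
      apply Finset.sum_congr rfl
      intro j hj
      have := Finset.mem_range.mp hj
      rw [if_neg (by omega)]
    simp only [this, if_true]
    rw [← hf]
    ring

/-- Master: if `q` pairs to zero with `Q 0,…,Q k` (weight `w`), it pairs to zero
with any polynomial of `natDegree ≤ k`. -/
theorem Imu_pair_zero {μ : Measure ℝ}
    (hmom : ∀ n : ℕ, Integrable (fun x : ℝ => x ^ n) μ)
    (Q : ℕ → Polynomial ℝ) (hm : ∀ n, (Q n).Monic) (hd : ∀ n, (Q n).natDegree = n)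
    (w q : Polynomial ℝ) (k : ℕ)
    (h : ∀ j, j ≤ k → Imu μ (q * Q j * w) = 0) :
    ∀ r : Polynomial ℝ, r.natDegree ≤ k → Imu μ (q * r * w) = 0 := by
  intro r hr
  obtain ⟨f, hf⟩ := monic_rep Q hm hd k r hr
  have : q * r * w = ∑ j ∈ Finset.range (k + 1), C (f j) * (q * Q j * w) := by
    rw [hf, Finset.mul_sum, Finset.sum_mul]
    apply Finset.sum_congr rfl; intro j _; ring
  rw [this, Imu_sum hmom]
  refine Finset.sum_eq_zero fun j hj => ?_
  have := Finset.mem_range.mp hj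
  rw [Imu_Cmul, h j (by omega), mul_zero]
theorem eq_zero_of_Imu_w {μ : Measure ℝ}
    (hpos : ∀ q : Polynomial ℝ, q ≠ 0 → 0 < ∫ x, q.eval x ^ 2 ∂μ)
    (w q : Polynomial ℝ) (hw : ∃ u : Polynomial ℝ, u ≠ 0 ∧ w = u * u)
    (h : Imu μ (q * q * w) = 0) : q = 0 := by
  obtain ⟨u, hu, rfl⟩ := hw
  by_contra hq
  have h1 : Imu μ ((u * q) * (u * q)) = 0 := by
    rw [show (u * q) * (u * q) = q * q * (u * u) from by ring]; exact h
  have h2 : (0:ℝ) < Imu μ ((u * q) * (u * q)) := by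
    have := hpos (u * q) (mul_ne_zero hu hq)
    simpa [Imu, sq, eval_mul] using this
  linarith

theorem Imu_orth_lt {μ : Measure ℝ}
    (hmom : ∀ n : ℕ, Integrable (fun x : ℝ => x ^ n) μ)
    (Q : ℕ → Polynomial ℝ) (hm : ∀ n, (Q n).Monic) (hd : ∀ n, (Q n).natDegree = n)
    (w : Polynomial ℝ) (ho : ∀ i j, i ≠ j → Imu μ (Q i * Q j * w) = 0)
    (m : ℕ) (q : Polynomial ℝ) (hq : q.natDegree < m) : Imu μ (Q m * q * w) = 0 := by
  obtain ⟨k, rfl⟩ := Nat.exists_eq_succ_of_ne_zero (by omega : m ≠ 0)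
  exact Imu_pair_zero hmom Q hm hd w (Q (k+1)) k (fun j hj => ho (k+1) j (by omega)) q (by omega)

theorem Imu_pair_monic {μ : Measure ℝ}
    (hmom : ∀ n : ℕ, Integrable (fun x : ℝ => x ^ n) μ)
    (Q : ℕ → Polynomial ℝ) (hm : ∀ n, (Q n).Monic) (hd : ∀ n, (Q n).natDegree = n)
    (w : Polynomial ℝ) (ho : ∀ i j, i ≠ j → Imu μ (Q i * Q j * w) = 0)
    (m : ℕ) (q : Polynomial ℝ) (hq : q.Monic) (hqd : q.natDegree = m) :
    Imu μ (Q m * q * w) = Imu μ (Q m * Q m * w) := by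
  have key : Imu μ (Q m * (q - Q m) * w) = 0 := by
    rcases eq_or_ne q (Q m) with h | h
    · rw [h, sub_self, mul_zero, zero_mul]
      simp [Imu]
    · have hne : q - Q m ≠ 0 := sub_ne_zero.mpr h
      have hdeg : (q - Q m).natDegree < m := by
        have h1 : q.degree = (Q m).degree := by
          rw [Polynomial.degree_eq_natDegree hq.ne_zero,
            Polynomial.degree_eq_natDegree (hm m).ne_zero, hqd, hd m]
        have h2 := Polynomial.degree_sub_lt h1 hq.ne_zero
          (by rw [hq.leadingCoeff, (hm m).leadingCoeff])
        rw [Polynomial.degree_eq_natDegree hq.ne_zero, hqd] at h2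
        exact (Polynomial.natDegree_lt_iff_degree_lt hne).mpr h2
      exact Imu_orth_lt hmom Q hm hd w ho m _ hdeg
  have expand : Q m * q * w = Q m * (q - Q m) * w + Q m * Q m * w := by ring
  rw [expand, Imu_add hmom, key, zero_add]
/-- Three-term recurrence for a monic OPS with polynomial weight `w`. -/
theorem recurrenceQ {μ : Measure ℝ}
    (hmom : ∀ n : ℕ, Integrable (fun x : ℝ => x ^ n) μ)
    (hpos : ∀ q : Polynomial ℝ, q ≠ 0 → 0 < ∫ x, q.eval x ^ 2 ∂μ)
    (Q : ℕ → Polynomial ℝ) (hm : ∀ n, (Q n).Monic) (hd : ∀ n, (Q n).natDegree = n)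
    (w : Polynomial ℝ) (hw : ∃ u : Polynomial ℝ, u ≠ 0 ∧ w = u * u)
    (ho : ∀ i j, i ≠ j → Imu μ (Q i * Q j * w) = 0) (m : ℕ) :
    ∃ b : ℝ, Q (m + 2) = (X - C b) * Q (m + 1)
      - C (Imu μ (Q (m+1) * Q (m+1) * w) / Imu μ (Q m * Q m * w)) * Q m := by
  set N1 := Imu μ (Q (m+1) * Q (m+1) * w) with hN1def
  set N0 := Imu μ (Q m * Q m * w) with hN0def
  have hposw : ∀ q : Polynomial ℝ, q ≠ 0 → 0 < Imu μ (q * q * w) := by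
    intro q hq
    rcases lt_trichotomy (Imu μ (q * q * w)) 0 with h | h | h
    · obtain ⟨u, hu, rfl⟩ := hw
      have h2 : (0:ℝ) < Imu μ ((u * q) * (u * q)) := by
        have := hpos (u * q) (mul_ne_zero hu hq)
        simpa [Imu, sq, eval_mul] using this
      rw [show (u * q) * (u * q) = q * q * (u * u) from by ring] at h2
      linarith
    · exact absurd (eq_zero_of_Imu_w hpos w q hw h) hq
    · exact h
  have hN1 : 0 < N1 := hposw _ (hm (m+1)).ne_zero
  have hN0 : 0 < N0 := hposw _ (hm m).ne_zero
  set b := Imu μ (X * Q (m+1) * Q (m+1) * w) / N1 with hbdef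
  refine ⟨b, ?_⟩
  set D := Q (m+2) - ((X - C b) * Q (m+1) - C (N1 / N0) * Q m) with hDdef
  have hDdeg : D.natDegree ≤ m + 1 := by
    have e : D = (Q (m+2) - X * Q (m+1)) + (C b * Q (m+1) + C (N1/N0) * Q m) := by
      rw [hDdef]; ring
    rw [e]
    apply le_trans (Polynomial.natDegree_add_le _ _)
    apply max_le
    · by_cases hz : Q (m+2) - X * Q (m+1) = 0
      · simp [hz]
      · have hmon : (X * Q (m+1)).Monic := monic_X.mul (hm (m+1))
        have hdeg : (X * Q (m+1)).natDegree = m + 2 := by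
          rw [monic_X.natDegree_mul (hm (m+1)), natDegree_X, hd]
          omega
        have h1 : (Q (m+2)).degree = (X * Q (m+1)).degree := by
          rw [Polynomial.degree_eq_natDegree (hm (m+2)).ne_zero,
            Polynomial.degree_eq_natDegree hmon.ne_zero, hd, hdeg]
        have h2 := Polynomial.degree_sub_lt h1 (hm (m+2)).ne_zero
          (by rw [(hm _).leadingCoeff, hmon.leadingCoeff])
        rw [Polynomial.degree_eq_natDegree (hm (m+2)).ne_zero, hd] at h2
        have := (Polynomial.natDegree_lt_iff_degree_lt hz).mpr h2
        omega
    · apply le_trans (Polynomial.natDegree_add_le _ _)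
      apply max_le <;>
        · exact le_trans (Polynomial.natDegree_C_mul_le _ _)
            (le_trans (le_of_eq (hd _)) (by omega))
  have hj : ∀ j, j ≤ m + 1 → Imu μ (D * Q j * w) = 0 := by
    intro j hjle
    have expand : Imu μ (D * Q j * w)
        = Imu μ (Q (m+2) * Q j * w) - Imu μ (Q (m+1) * (X * Q j) * w)
          + b * Imu μ (Q (m+1) * Q j * w) + (N1/N0) * Imu μ (Q m * Q j * w) := by
      have e : D * Q j * w
          = (Q (m+2) * Q j * w - Q (m+1) * (X * Q j) * w)
            + (C b * (Q (m+1) * Q j * w) + C (N1/N0) * (Q m * Q j * w)) := by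
        rw [hDdef]; ring
      rw [e, Imu_add hmom, Imu_sub hmom, Imu_add hmom, Imu_Cmul, Imu_Cmul]; ring
    rcases Nat.lt_or_ge j m with hj2 | hj2
    · -- j < m
      rw [expand, ho (m+2) j (by omega), ho (m+1) j (by omega), ho m j (by omega),
        Imu_orth_lt hmom Q hm hd w ho (m+1) (X * Q j)
          (by calc (X * Q j).natDegree ≤ X.natDegree + (Q j).natDegree :=
                Polynomial.natDegree_mul_le
              _ < m + 1 := by rw [natDegree_X, hd]; omega)]
      ring
    · rcases eq_or_lt_of_le hj2 with hj3 | hj3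
      · -- j = m
        subst hj3
        rw [expand, ho (m+2) m (by omega), ho (m+1) m (by omega),
          Imu_pair_monic hmom Q hm hd w ho (m+1) (X * Q m) (monic_X.mul (hm m))
            (by rw [monic_X.natDegree_mul (hm m), natDegree_X, hd]; omega)]
        field_simp
        rw [hN1def, hN0def]; ring
      · -- j = m + 1
        have : j = m + 1 := by omega
        subst this
        rw [expand, ho (m+2) (m+1) (by omega), ho m (m+1) (by omega),
          show Q (m+1) * (X * Q (m+1)) * w = X * Q (m+1) * Q (m+1) * w from by ring,
          hbdef]
        field_simp
        rw [hN1def, hN0def]; ring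
  have hzero : Imu μ (D * D * w) = 0 :=
    Imu_pair_zero hmom Q hm hd w D (m+1) hj D hDdeg
  have hD0 : D = 0 := eq_zero_of_Imu_w hpos w D hw hzero
  rw [hDdef, sub_eq_zero] at hD0
  exact hD0
theorem nrmSq_Imu (μ : Measure ℝ) (Q : Polynomial ℝ) :
    nrmSq μ Q = Imu μ (Q * Q * 1) := by
  simp [nrmSq, Imu, sq]

theorem nrmSq2_Imu (μ : Measure ℝ) (c : ℝ) (Q : Polynomial ℝ) :
    nrmSq2 μ c Q = Imu μ (Q * Q * (X - C c)^2) := by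
  simp [nrmSq2, Imu, sq]

theorem P_zero_eq_one (P : ℕ → Polynomial ℝ) (hPm : ∀ n, (P n).Monic)
    (hPd : ∀ n, (P n).natDegree = n) : P 0 = 1 :=
  (hPm 0).natDegree_eq_zero.mp (hPd 0)

section Wronskian

variable {μ : Measure ℝ}

/-- Confluent Christoffel–Darboux: the Wronskian at `c` equals `‖P_m‖² K_m(c,c)`. -/
theorem wronskian_eq
    (hmom : ∀ n : ℕ, Integrable (fun x : ℝ => x ^ n) μ)
    (hpos : ∀ q : Polynomial ℝ, q ≠ 0 → 0 < ∫ x, q.eval x ^ 2 ∂μ)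
    (P : ℕ → Polynomial ℝ) (hPm : ∀ n, (P n).Monic) (hPd : ∀ n, (P n).natDegree = n)
    (ho : ∀ i j, i ≠ j → Imu μ (P i * P j * 1) = 0) (c : ℝ) :
    ∀ m, (derivative (P (m+1))).eval c * (P m).eval c
        - (derivative (P m)).eval c * (P (m+1)).eval c
      = nrmSq μ (P m) * Kcc μ P c m := by
  have hw1 : ∃ u : Polynomial ℝ, u ≠ 0 ∧ (1 : Polynomial ℝ) = u * u := ⟨1, one_ne_zero, by ring⟩
  have hN : ∀ k, 0 < nrmSq μ (P k) := by
    intro k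
    have := hpos (P k) (hPm k).ne_zero
    simpa [nrmSq] using this
  have hP0 : P 0 = 1 := P_zero_eq_one P hPm hPd
  intro m
  induction m with
  | zero =>
    have hP1 : P 1 = X + C ((P 1).coeff 0) := by
      have h1 := Polynomial.eq_X_add_C_of_natDegree_le_one (le_of_eq (hPd 1))
      have h2 : (P 1).coeff 1 = 1 := by
        have := (hPm 1).coeff_natDegree
        rwa [hPd 1] at this
      rw [h1, h2]; simp
    have hder1 : (derivative (P 1)).eval c = 1 := by rw [hP1]; simp
    have hder0 : (derivative (P 0)).eval c = 0 := by rw [hP0]; simp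
    have hev0 : (P 0).eval c = 1 := by rw [hP0]; simp
    have hK : Kcc μ P c 0 = 1 / nrmSq μ (P 0) := by
      simp [Kcc, hev0]
    rw [hder1, hder0, hev0, hK]
    field_simp
    rw [zero_mul, sub_zero]
    exact (div_self (hN 0).ne').symm
  | succ m ih =>
    obtain ⟨b, hb⟩ := recurrenceQ hmom hpos P hPm hPd 1 hw1 ho m
    set a := Imu μ (P (m+1) * P (m+1) * 1) / Imu μ (P m * P m * 1) with hadef
    have hNa : a = nrmSq μ (P (m+1)) / nrmSq μ (P m) := by
      rw [hadef, nrmSq_Imu, nrmSq_Imu]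
    have hder : derivative (P (m+2)) = P (m+1) + (X - C b) * derivative (P (m+1))
        - C a * derivative (P m) := by
      rw [hb]
      simp only [derivative_sub, derivative_mul, derivative_X, derivative_C, sub_zero,
        Polynomial.derivative_C_mul]
      ring
    have hstep : (derivative (P (m+2))).eval c * (P (m+1)).eval c
        - (derivative (P (m+1))).eval c * (P (m+2)).eval c
        = (P (m+1)).eval c ^ 2
          + a * ((derivative (P (m+1))).eval c * (P m).eval c
            - (derivative (P m)).eval c * (P (m+1)).eval c) := by
      rw [hder, hb]
      simp only [eval_add, eval_sub, eval_mul, eval_X, eval_C]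
      ring
    rw [hstep, ih, hNa]
    rw [show Kcc μ P c (m+1)
        = Kcc μ P c m + (P (m+1)).eval c ^ 2 / nrmSq μ (P (m+1)) from by
      rw [Kcc, Kcc, Finset.sum_range_succ]]
    have h1 := hN m
    have h2 := hN (m+1)
    field_simp
    ring
end Wronskian

theorem Kcc_pos {μ : Measure ℝ}
    (hpos : ∀ q : Polynomial ℝ, q ≠ 0 → 0 < ∫ x, q.eval x ^ 2 ∂μ)
    (P : ℕ → Polynomial ℝ) (hPm : ∀ n, (P n).Monic) (hPd : ∀ n, (P n).natDegree = n)
    (c : ℝ) (m : ℕ) : 0 < Kcc μ P c m := by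
  have hN : ∀ k, 0 < nrmSq μ (P k) := by
    intro k
    have := hpos (P k) (hPm k).ne_zero
    simpa [nrmSq] using this
  rw [Kcc]
  apply Finset.sum_pos'
  · intro j _
    exact div_nonneg (sq_nonneg _) (hN j).le
  · refine ⟨0, Finset.mem_range.mpr (by omega), ?_⟩
    have hev0 : (P 0).eval c = 1 := by rw [P_zero_eq_one P hPm hPd]; simp
    rw [hev0]
    simp only [one_pow]
    exact div_pos one_pos (hN 0)
/-- Christoffel: `(x-c)² P2_m = P_{m+2} - d_m P_{m+1} + e_m P_m`. -/
theorem christoffel {μ : Measure ℝ}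
    (hmom : ∀ n : ℕ, Integrable (fun x : ℝ => x ^ n) μ)
    (hpos : ∀ q : Polynomial ℝ, q ≠ 0 → 0 < ∫ x, q.eval x ^ 2 ∂μ)
    (c : ℝ)
    (P : ℕ → Polynomial ℝ) (hPm : ∀ n, (P n).Monic) (hPd : ∀ n, (P n).natDegree = n)
    (hPo1 : ∀ i j, i ≠ j → Imu μ (P i * P j * 1) = 0)
    (P2 : ℕ → Polynomial ℝ) (hP2m : ∀ n, (P2 n).Monic) (hP2d : ∀ n, (P2 n).natDegree = n)
    (hP2o1 : ∀ i j, i ≠ j → Imu μ (P2 i * P2 j * (X - C c)^2) = 0) (m : ℕ) :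
    (X - C c)^2 * P2 m
      = P (m+2) - C (dCoef P c m) * P (m+1) + C (eCoef P c m) * P m := by
  have hw2 : ∃ u : Polynomial ℝ, u ≠ 0 ∧ ((X - C c)^2 : Polynomial ℝ) = u * u :=
    ⟨X - C c, Polynomial.X_sub_C_ne_zero c, by ring⟩
  have hW := wronskian_eq hmom hpos P hPm hPd hPo1 c m
  have hKpos := Kcc_pos hpos P hPm hPd c m
  have hNpos : 0 < nrmSq μ (P m) := by
    have := hpos (P m) (hPm m).ne_zero
    simpa [nrmSq] using this
  have hδ : (P (m+1)).eval c * (derivative (P m)).eval c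
      - (derivative (P (m+1))).eval c * (P m).eval c ≠ 0 := by
    have h1 : (P (m+1)).eval c * (derivative (P m)).eval c
        - (derivative (P (m+1))).eval c * (P m).eval c
        = -(nrmSq μ (P m) * Kcc μ P c m) := by linarith
    rw [h1]
    have := mul_pos hNpos hKpos
    linarith
  set Qp := P (m+2) - C (dCoef P c m) * P (m+1) + C (eCoef P c m) * P m with hQp
  have hQc : Qp.eval c = 0 := by
    rw [hQp]
    simp only [eval_add, eval_sub, eval_mul, eval_C]
    rw [dCoef, eCoef]
    generalize hδv : (P (m+1)).eval c * (derivative (P m)).eval c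
      - (derivative (P (m+1))).eval c * (P m).eval c = δ at hδ ⊢
    field_simp
    subst hδv
    ring
  have hQd : (derivative Qp).eval c = 0 := by
    rw [hQp]
    simp only [derivative_add, derivative_sub, Polynomial.derivative_C_mul,
      eval_add, eval_sub, eval_mul, eval_C]
    rw [dCoef, eCoef]
    generalize hδv : (P (m+1)).eval c * (derivative (P m)).eval c
      - (derivative (P (m+1))).eval c * (P m).eval c = δ at hδ ⊢
    field_simp
    subst hδv
    ring
  obtain ⟨R1, hR1⟩ := Polynomial.dvd_iff_isRoot.mpr hQc
  have hR1c : R1.eval c = 0 := by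
    have h3 : (derivative Qp).eval c = R1.eval c := by
      rw [hR1]
      simp [derivative_mul]
    rw [← h3]; exact hQd
  obtain ⟨R, hRR⟩ := Polynomial.dvd_iff_isRoot.mpr hR1c
  have hQp2 : Qp = (X - C c)^2 * R := by rw [hR1, hRR]; ring
  -- degree bookkeeping
  have hb : (C (eCoef P c m) * P m - C (dCoef P c m) * P (m+1)).degree
      < (P (m+2)).degree := by
    rw [Polynomial.degree_eq_natDegree (hPm (m+2)).ne_zero, hPd]
    by_cases hz : C (eCoef P c m) * P m - C (dCoef P c m) * P (m+1) = 0
    · rw [hz, Polynomial.degree_zero]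
      exact WithBot.bot_lt_coe _
    · rw [← Polynomial.natDegree_lt_iff_degree_lt hz]
      have h7 := Polynomial.natDegree_sub_le (C (eCoef P c m) * P m)
        (C (dCoef P c m) * P (m+1))
      have h8 := Polynomial.natDegree_C_mul_le (eCoef P c m) (P m)
      have h9 := Polynomial.natDegree_C_mul_le (dCoef P c m) (P (m+1))
      rw [hPd] at h8
      rw [hPd] at h9
      omega
  have hQform : Qp = P (m+2) + (C (eCoef P c m) * P m - C (dCoef P c m) * P (m+1)) := by
    rw [hQp]; ring
  have hQpm : Qp.Monic := by
    rw [hQform]; exact (hPm (m+2)).add_of_left hb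
  have hQpdeg : Qp.degree = ((m+2 : ℕ) : WithBot ℕ) := by
    rw [hQform, Polynomial.degree_add_eq_left_of_degree_lt hb,
      Polynomial.degree_eq_natDegree (hPm (m+2)).ne_zero, hPd]
  have hQpd : Qp.natDegree = m+2 := Polynomial.natDegree_eq_of_degree_eq_some hQpdeg
  have hmon2 : ((X - C c)^2 : Polynomial ℝ).Monic := (monic_X_sub_C c).pow 2
  have hRm : R.Monic := by
    apply hmon2.of_mul_monic_left
    rw [← hQp2]; exact hQpm
  have hRd : R.natDegree = m := by
    have h4 : Qp.natDegree = 2 + R.natDegree := by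
      rw [hQp2, hmon2.natDegree_mul hRm, Polynomial.natDegree_pow,
        Polynomial.natDegree_X_sub_C]
    omega
  -- identify R with P2 m
  have hfin : P2 m = R := by
    rcases eq_or_ne (P2 m) R with hEq | hNe
    · exact hEq
    · exfalso
      set E := P2 m - R with hE
      have hEne : E ≠ 0 := sub_ne_zero.mpr hNe
      have hEdeg : E.natDegree < m := by
        have h1 : (P2 m).degree = R.degree := by
          rw [Polynomial.degree_eq_natDegree (hP2m m).ne_zero,
            Polynomial.degree_eq_natDegree hRm.ne_zero, hP2d, hRd]
        have h2 := Polynomial.degree_sub_lt h1 (hP2m m).ne_zero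
          (by rw [(hP2m m).leadingCoeff, hRm.leadingCoeff])
        rw [Polynomial.degree_eq_natDegree (hP2m m).ne_zero, hP2d] at h2
        exact (Polynomial.natDegree_lt_iff_degree_lt hEne).mpr h2
      have h6 : (X - C c)^2 * R
          = P (m+2) - C (dCoef P c m) * P (m+1) + C (eCoef P c m) * P m :=
        hQp2.symm.trans hQp
      have h5 : E * E * (X - C c)^2
          = P2 m * E * (X - C c)^2 - P (m+2) * E * 1
            + C (dCoef P c m) * (P (m+1) * E * 1)
            - C (eCoef P c m) * (P m * E * 1) := by
        linear_combination (-E) * h6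
      have hzero : Imu μ (E * E * (X - C c)^2) = 0 := by
        rw [h5, Imu_sub hmom, Imu_add hmom, Imu_sub hmom, Imu_Cmul, Imu_Cmul,
          Imu_orth_lt hmom P2 hP2m hP2d _ hP2o1 m E hEdeg,
          Imu_orth_lt hmom P hPm hPd 1 hPo1 (m+2) E (by omega),
          Imu_orth_lt hmom P hPm hPd 1 hPo1 (m+1) E (by omega),
          Imu_orth_lt hmom P hPm hPd 1 hPo1 m E hEdeg]
        ring
      exact hEne (eq_zero_of_Imu_w hpos _ E hw2 hzero)
  rw [hfin]
  exact hQp2.symm.trans hQp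
theorem Imu_posw {μ : Measure ℝ}
    (hpos : ∀ q : Polynomial ℝ, q ≠ 0 → 0 < ∫ x, q.eval x ^ 2 ∂μ)
    (w : Polynomial ℝ) (hw : ∃ u : Polynomial ℝ, u ≠ 0 ∧ w = u * u)
    (q : Polynomial ℝ) (hq : q ≠ 0) : 0 < Imu μ (q * q * w) := by
  obtain ⟨u, hu, rfl⟩ := hw
  have h2 : (0:ℝ) < Imu μ ((u * q) * (u * q)) := by
    have := hpos (u * q) (mul_ne_zero hu hq)
    simpa [Imu, sq, eval_mul] using this
  rw [show (u * q) * (u * q) = q * q * (u * u) from by ring] at h2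
  exact h2

/-- `‖P2_j‖²_{[2]} = e_j ‖P_j‖²`. -/
theorem nrmSq2_eq_eCoef {μ : Measure ℝ}
    (hmom : ∀ n : ℕ, Integrable (fun x : ℝ => x ^ n) μ)
    (hpos : ∀ q : Polynomial ℝ, q ≠ 0 → 0 < ∫ x, q.eval x ^ 2 ∂μ)
    (c : ℝ)
    (P : ℕ → Polynomial ℝ) (hPm : ∀ n, (P n).Monic) (hPd : ∀ n, (P n).natDegree = n)
    (hPo1 : ∀ i j, i ≠ j → Imu μ (P i * P j * 1) = 0)
    (P2 : ℕ → Polynomial ℝ) (hP2m : ∀ n, (P2 n).Monic) (hP2d : ∀ n, (P2 n).natDegree = n)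
    (hP2o1 : ∀ i j, i ≠ j → Imu μ (P2 i * P2 j * (X - C c)^2) = 0) (j : ℕ) :
    nrmSq2 μ c (P2 j) = eCoef P c j * nrmSq μ (P j) := by
  have hchr := christoffel hmom hpos c P hPm hPd hPo1 P2 hP2m hP2d hP2o1 j
  have h1 : P2 j * P2 j * (X - C c)^2
      = P (j+2) * P2 j * 1 - C (dCoef P c j) * (P (j+1) * P2 j * 1)
        + C (eCoef P c j) * (P j * P2 j * 1) := by
    linear_combination (P2 j) * hchr
  rw [nrmSq2_Imu, h1, Imu_add hmom, Imu_sub hmom, Imu_Cmul, Imu_Cmul,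
    Imu_orth_lt hmom P hPm hPd 1 hPo1 (j+2) (P2 j) (by rw [hP2d]; omega),
    Imu_orth_lt hmom P hPm hPd 1 hPo1 (j+1) (P2 j) (by rw [hP2d]; omega),
    Imu_pair_monic hmom P hPm hPd 1 hPo1 j (P2 j) (hP2m j) (hP2d j),
    ← nrmSq_Imu]
  ring

theorem eCoef_eq_Kcc {μ : Measure ℝ}
    (hmom : ∀ n : ℕ, Integrable (fun x : ℝ => x ^ n) μ)
    (hpos : ∀ q : Polynomial ℝ, q ≠ 0 → 0 < ∫ x, q.eval x ^ 2 ∂μ)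
    (c : ℝ)
    (P : ℕ → Polynomial ℝ) (hPm : ∀ n, (P n).Monic) (hPd : ∀ n, (P n).natDegree = n)
    (hPo1 : ∀ i j, i ≠ j → Imu μ (P i * P j * 1) = 0) (j : ℕ) :
    eCoef P c j = (nrmSq μ (P (j+1)) * Kcc μ P c (j+1)) / (nrmSq μ (P j) * Kcc μ P c j) := by
  have hW1 := wronskian_eq hmom hpos P hPm hPd hPo1 c j
  have hW2 := wronskian_eq hmom hpos P hPm hPd hPo1 c (j+1)
  rw [eCoef,
    show (P (j+2)).eval c * (derivative (P (j+1))).eval c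
        - (derivative (P (j+2))).eval c * (P (j+1)).eval c
      = -((derivative (P (j+1+1))).eval c * (P (j+1)).eval c
        - (derivative (P (j+1))).eval c * (P (j+1+1)).eval c) from by ring_nf,
    show (P (j+1)).eval c * (derivative (P j)).eval c
        - (derivative (P (j+1))).eval c * (P j).eval c
      = -((derivative (P (j+1))).eval c * (P j).eval c
        - (derivative (P j)).eval c * (P (j+1)).eval c) from by ring,
    neg_div_neg_eq, hW1, hW2]

/-- `‖P2_j‖²_{[2]} = ‖P_{j+1}‖² K_{j+1}(c,c)/K_j(c,c)`. -/
theorem nrmSq2_eq_Kcc {μ : Measure ℝ}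
    (hmom : ∀ n : ℕ, Integrable (fun x : ℝ => x ^ n) μ)
    (hpos : ∀ q : Polynomial ℝ, q ≠ 0 → 0 < ∫ x, q.eval x ^ 2 ∂μ)
    (c : ℝ)
    (P : ℕ → Polynomial ℝ) (hPm : ∀ n, (P n).Monic) (hPd : ∀ n, (P n).natDegree = n)
    (hPo1 : ∀ i j, i ≠ j → Imu μ (P i * P j * 1) = 0)
    (P2 : ℕ → Polynomial ℝ) (hP2m : ∀ n, (P2 n).Monic) (hP2d : ∀ n, (P2 n).natDegree = n)
    (hP2o1 : ∀ i j, i ≠ j → Imu μ (P2 i * P2 j * (X - C c)^2) = 0) (j : ℕ) :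
    nrmSq2 μ c (P2 j) = nrmSq μ (P (j+1)) * Kcc μ P c (j+1) / Kcc μ P c j := by
  have hN : ∀ k, 0 < nrmSq μ (P k) := by
    intro k
    have := hpos (P k) (hPm k).ne_zero
    simpa [nrmSq] using this
  have hK0 := Kcc_pos hpos P hPm hPd c j
  rw [nrmSq2_eq_eCoef hmom hpos c P hPm hPd hPo1 P2 hP2m hP2d hP2o1 j,
    eCoef_eq_Kcc hmom hpos c P hPm hPd hPo1 j]
  field_simp [(hN j).ne', (hN (j+1)).ne', hK0.ne']
/-- Expansion of `P_{m+2}` in the `P2` basis. -/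
theorem expansionP {μ : Measure ℝ}
    (hmom : ∀ n : ℕ, Integrable (fun x : ℝ => x ^ n) μ)
    (hpos : ∀ q : Polynomial ℝ, q ≠ 0 → 0 < ∫ x, q.eval x ^ 2 ∂μ)
    (c : ℝ)
    (P : ℕ → Polynomial ℝ) (hPm : ∀ n, (P n).Monic) (hPd : ∀ n, (P n).natDegree = n)
    (hPo1 : ∀ i j, i ≠ j → Imu μ (P i * P j * 1) = 0)
    (P2 : ℕ → Polynomial ℝ) (hP2m : ∀ n, (P2 n).Monic) (hP2d : ∀ n, (P2 n).natDegree = n)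
    (hP2o1 : ∀ i j, i ≠ j → Imu μ (P2 i * P2 j * (X - C c)^2) = 0) (m : ℕ) :
    P (m+2) = P2 (m+2)
      + C (-(dCoef P c (m+1)) * nrmSq μ (P (m+2)) / nrmSq2 μ c (P2 (m+1))) * P2 (m+1)
      + C (nrmSq μ (P (m+2)) / nrmSq2 μ c (P2 m)) * P2 m := by
  have hw2 : ∃ u : Polynomial ℝ, u ≠ 0 ∧ ((X - C c)^2 : Polynomial ℝ) = u * u :=
    ⟨X - C c, Polynomial.X_sub_C_ne_zero c, by ring⟩
  have hMpos : ∀ k, 0 < nrmSq2 μ c (P2 k) := by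
    intro k
    rw [nrmSq2_Imu]
    exact Imu_posw hpos _ hw2 _ (hP2m k).ne_zero
  have hNpos : ∀ k, 0 < nrmSq μ (P k) := by
    intro k
    have := hpos (P k) (hPm k).ne_zero
    simpa [nrmSq] using this
  set c1 := -(dCoef P c (m+1)) * nrmSq μ (P (m+2)) / nrmSq2 μ c (P2 (m+1)) with hc1
  set c2 := nrmSq μ (P (m+2)) / nrmSq2 μ c (P2 m) with hc2
  set E := P (m+2) - P2 (m+2) - C c1 * P2 (m+1) - C c2 * P2 m with hEdef
  have hEj : ∀ j, j ≤ m + 1 → Imu μ (E * P2 j * (X - C c)^2) = 0 := by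
    intro j hj
    have hchr := christoffel hmom hpos c P hPm hPd hPo1 P2 hP2m hP2d hP2o1 j
    have hsplit : E * P2 j * (X - C c)^2
        = (P (m+2) * P (j+2) * 1 - C (dCoef P c j) * (P (m+2) * P (j+1) * 1)
            + C (eCoef P c j) * (P (m+2) * P j * 1))
          - P2 (m+2) * P2 j * (X - C c)^2
          - C c1 * (P2 (m+1) * P2 j * (X - C c)^2)
          - C c2 * (P2 m * P2 j * (X - C c)^2) := by
      rw [hEdef]
      linear_combination (P (m+2)) * hchr
    rw [hsplit, Imu_sub hmom, Imu_sub hmom, Imu_sub hmom, Imu_add hmom, Imu_sub hmom,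
      Imu_Cmul, Imu_Cmul, Imu_Cmul, Imu_Cmul,
      hP2o1 (m+2) j (by omega)]
    rcases Nat.lt_or_ge j m with h2 | h2
    · rw [hPo1 (m+2) (j+2) (by omega), hPo1 (m+2) (j+1) (by omega),
        hPo1 (m+2) j (by omega), hP2o1 (m+1) j (by omega), hP2o1 m j (by omega)]
      ring
    · rcases eq_or_lt_of_le h2 with h3 | h3
      · -- j = m
        subst h3
        rw [hPo1 (m+2) (m+1) (by omega), hPo1 (m+2) m (by omega),
          hP2o1 (m+1) m (by omega), ← nrmSq_Imu, ← nrmSq2_Imu, hc2]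
        field_simp [(hMpos m).ne']
        ring
      · -- j = m+1
        obtain rfl : j = m + 1 := by omega
        rw [hPo1 (m+2) (m+3) (by omega), hPo1 (m+2) (m+1) (by omega),
          hP2o1 m (m+1) (by omega), ← nrmSq_Imu, ← nrmSq2_Imu, hc1]
        field_simp [(hMpos (m+1)).ne']
        ring
  have hEdeg : E.natDegree ≤ m + 1 := by
    have e : E = (P (m+2) - P2 (m+2)) - (C c1 * P2 (m+1) + C c2 * P2 m) := by
      rw [hEdef]; ring
    rw [e]
    apply le_trans (Polynomial.natDegree_sub_le _ _)
    apply max_le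
    · by_cases hz : P (m+2) - P2 (m+2) = 0
      · simp [hz]
      · have h1 : (P (m+2)).degree = (P2 (m+2)).degree := by
          rw [Polynomial.degree_eq_natDegree (hPm (m+2)).ne_zero,
            Polynomial.degree_eq_natDegree (hP2m (m+2)).ne_zero, hPd, hP2d]
        have h2 := Polynomial.degree_sub_lt h1 (hPm (m+2)).ne_zero
          (by rw [(hPm _).leadingCoeff, (hP2m _).leadingCoeff])
        rw [Polynomial.degree_eq_natDegree (hPm (m+2)).ne_zero, hPd] at h2
        have := (Polynomial.natDegree_lt_iff_degree_lt hz).mpr h2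
        omega
    · apply le_trans (Polynomial.natDegree_add_le _ _)
      apply max_le <;>
        · exact le_trans (Polynomial.natDegree_C_mul_le _ _)
            (le_trans (le_of_eq (hP2d _)) (by omega))
  have hzero : Imu μ (E * E * (X - C c)^2) = 0 :=
    Imu_pair_zero hmom P2 hP2m hP2d _ E (m+1) hEj E hEdeg
  have hE0 : E = 0 := eq_zero_of_Imu_w hpos _ E hw2 hzero
  rw [hEdef] at hE0
  linear_combination hE0
/-- for every `n ≥ 2`,
`p_n = ξ_{n,n} p_n^{[2]} + ξ_{n-1,n} p_{n-1}^{[2]} + ξ_{n-2,n} p_{n-2}^{[2]}`, with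
`ξ_{n,n} = r_n/r_n^{[2]} = (r_n/r_{n+1})·(K_{n+1}(c,c)/K_n(c,c))^{1/2} = e_n^{1/2}`,
`ξ_{n-1,n} = -d_{n-1}·(K_{n-1}(c,c)/K_n(c,c))^{1/2}`, and
`ξ_{n-2,n} = (r_{n-1}/r_n)·(K_{n-2}(c,c)/K_{n-1}(c,c))^{1/2}`. -/
theorem stmt7
    (μ : Measure ℝ) [IsFiniteMeasure μ]
    (hmom : ∀ n : ℕ, Integrable (fun x : ℝ => x ^ n) μ)
    (hpos : ∀ q : Polynomial ℝ, q ≠ 0 → 0 < ∫ x, q.eval x ^ 2 ∂μ)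
    (c : ℝ) (hc : ∀ᵐ x ∂μ, c < x)
    (P : ℕ → Polynomial ℝ) (hPm : ∀ n, (P n).Monic) (hPd : ∀ n, (P n).natDegree = n)
    (hPo : ∀ m n, m ≠ n → ∫ x, (P m).eval x * (P n).eval x ∂μ = 0)
    (P2 : ℕ → Polynomial ℝ) (hP2m : ∀ n, (P2 n).Monic) (hP2d : ∀ n, (P2 n).natDegree = n)
    (hP2o : ∀ m n, m ≠ n → ∫ x, (P2 m).eval x * (P2 n).eval x * (x - c) ^ 2 ∂μ = 0) :
    ∀ n : ℕ, 2 ≤ n →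
      onP μ P n
        = C (rC μ P n / r2C μ c P2 n) * onP2 μ c P2 n
          + C (-(dCoef P c (n - 1)) * Real.sqrt (Kcc μ P c (n - 1) / Kcc μ P c n))
              * onP2 μ c P2 (n - 1)
          + C ((rC μ P (n - 1) / rC μ P n)
                * Real.sqrt (Kcc μ P c (n - 2) / Kcc μ P c (n - 1)))
              * onP2 μ c P2 (n - 2)
      ∧ rC μ P n / r2C μ c P2 n
          = (rC μ P n / rC μ P (n + 1)) * Real.sqrt (Kcc μ P c (n + 1) / Kcc μ P c n)
      ∧ rC μ P n / r2C μ c P2 n = Real.sqrt (eCoef P c n) := by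
  intro n hn
  obtain ⟨m, rfl⟩ : ∃ m, n = m + 2 := ⟨n - 2, by omega⟩
  have hw2 : ∃ u : Polynomial ℝ, u ≠ 0 ∧ ((X - C c)^2 : Polynomial ℝ) = u * u :=
    ⟨X - C c, Polynomial.X_sub_C_ne_zero c, by ring⟩
  have hPo1 : ∀ i j, i ≠ j → Imu μ (P i * P j * 1) = 0 := by
    intro i j hij
    have := hPo i j hij
    simpa [Imu] using this
  have hP2o1 : ∀ i j, i ≠ j → Imu μ (P2 i * P2 j * (X - C c)^2) = 0 := by
    intro i j hij
    have := hP2o i j hij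
    simpa [Imu] using this
  have hNpos : ∀ k, 0 < nrmSq μ (P k) := by
    intro k
    have := hpos (P k) (hPm k).ne_zero
    simpa [nrmSq] using this
  have hMpos : ∀ k, 0 < nrmSq2 μ c (P2 k) := by
    intro k
    rw [nrmSq2_Imu]
    exact Imu_posw hpos _ hw2 _ (hP2m k).ne_zero
  have hKpos : ∀ k, 0 < Kcc μ P c k := Kcc_pos hpos P hPm hPd c
  have hM : ∀ j, nrmSq2 μ c (P2 j) = nrmSq μ (P (j+1)) * Kcc μ P c (j+1) / Kcc μ P c j :=
    nrmSq2_eq_Kcc hmom hpos c P hPm hPd hPo1 P2 hP2m hP2d hP2o1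
  have hsN : ∀ k, 0 < Real.sqrt (nrmSq μ (P k)) := fun k => Real.sqrt_pos.mpr (hNpos k)
  have hsM : ∀ k, 0 < Real.sqrt (nrmSq2 μ c (P2 k)) := fun k => Real.sqrt_pos.mpr (hMpos k)
  have hsK : ∀ k, 0 < Real.sqrt (Kcc μ P c k) := fun k => Real.sqrt_pos.mpr (hKpos k)
  have mN : ∀ k, Real.sqrt (nrmSq μ (P k)) * Real.sqrt (nrmSq μ (P k)) = nrmSq μ (P k) :=
    fun k => Real.mul_self_sqrt (hNpos k).le
  have mK : ∀ k, Real.sqrt (Kcc μ P c k) * Real.sqrt (Kcc μ P c k) = Kcc μ P c k :=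
    fun k => Real.mul_self_sqrt (hKpos k).le
  simp only [show m + 2 - 1 = m + 1 from rfl, show m + 2 - 2 = m from rfl]
  refine ⟨?_, ?_, ?_⟩
  · -- part 1
    have hexp := expansionP hmom hpos c P hPm hPd hPo1 P2 hP2m hP2d hP2o1 m
    simp only [onP, onP2]
    rw [hexp]
    have t1 : (C (rC μ P (m+2)) : Polynomial ℝ)
        = C (rC μ P (m+2) / r2C μ c P2 (m+2)) * C (r2C μ c P2 (m+2)) := by
      rw [← C_mul, div_mul_cancel₀]
      exact ne_of_gt (by rw [r2C]; exact one_div_pos.mpr (hsM (m+2)))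
    have s2 : rC μ P (m+2) * (-(dCoef P c (m+1)) * nrmSq μ (P (m+2)) / nrmSq2 μ c (P2 (m+1)))
        = -(dCoef P c (m+1)) * Real.sqrt (Kcc μ P c (m+1) / Kcc μ P c (m+2))
          * r2C μ c P2 (m+1) := by
      simp only [rC, r2C]
      rw [hM (m+1),
        Real.sqrt_div (hKpos (m+1)).le,
        Real.sqrt_div (mul_nonneg (hNpos (m+2)).le (hKpos (m+2)).le),
        Real.sqrt_mul (hNpos (m+2)).le]
      have key : ∀ (N K1 K2 sN s1 s2 d : ℝ), 0 < sN → 0 < s1 → 0 < s2 →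
          sN * sN = N → s1 * s1 = K1 → s2 * s2 = K2 →
          1 / sN * (d * N / (N * K2 / K1)) = d * (s1 / s2) * (1 / (sN * s2 / s1)) := by
        intro N K1 K2 sN s1 s2 d h1 h2 h3 e1 e2 e3
        subst e1; subst e2; subst e3
        field_simp
      exact key _ _ _ _ _ _ _ (hsN (m+2)) (hsK (m+1)) (hsK (m+2))
        (mN (m+2)) (mK (m+1)) (mK (m+2))
    have s3 : rC μ P (m+2) * (nrmSq μ (P (m+2)) / nrmSq2 μ c (P2 m))
        = rC μ P (m+1) / rC μ P (m+2)
          * Real.sqrt (Kcc μ P c m / Kcc μ P c (m+1)) * r2C μ c P2 m := by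
      simp only [rC, r2C]
      rw [hM m,
        Real.sqrt_div (hKpos m).le,
        Real.sqrt_div (mul_nonneg (hNpos (m+1)).le (hKpos (m+1)).le),
        Real.sqrt_mul (hNpos (m+1)).le]
      have key : ∀ (N1 N2 K0 K1 sN1 sN2 s0 s1 : ℝ), 0 < sN1 → 0 < sN2 → 0 < s0 → 0 < s1 →
          sN1 * sN1 = N1 → sN2 * sN2 = N2 → s0 * s0 = K0 → s1 * s1 = K1 →
          1 / sN2 * (N2 / (N1 * K1 / K0))
            = 1 / sN1 / (1 / sN2) * (s0 / s1) * (1 / (sN1 * s1 / s0)) := by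
        intro N1 N2 K0 K1 sN1 sN2 s0 s1 h1 h2 h3 h4 e1 e2 e3 e4
        subst e1; subst e2; subst e3; subst e4
        field_simp
      exact key _ _ _ _ _ _ _ _ (hsN (m+1)) (hsN (m+2)) (hsK m) (hsK (m+1))
        (mN (m+1)) (mN (m+2)) (mK m) (mK (m+1))
    have t2 : (C (rC μ P (m+2)) : Polynomial ℝ)
          * C (-(dCoef P c (m+1)) * nrmSq μ (P (m+2)) / nrmSq2 μ c (P2 (m+1)))
        = C (-(dCoef P c (m+1)) * Real.sqrt (Kcc μ P c (m+1) / Kcc μ P c (m+2)))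
          * C (r2C μ c P2 (m+1)) := by
      rw [← C_mul, ← C_mul, s2]
    have t3 : (C (rC μ P (m+2)) : Polynomial ℝ)
          * C (nrmSq μ (P (m+2)) / nrmSq2 μ c (P2 m))
        = C (rC μ P (m+1) / rC μ P (m+2) * Real.sqrt (Kcc μ P c m / Kcc μ P c (m+1)))
          * C (r2C μ c P2 m) := by
      rw [← C_mul, ← C_mul, ← s3]
    linear_combination t1 * P2 (m+2) + t2 * P2 (m+1) + t3 * P2 m
  · -- part 2
    simp only [rC, r2C]
    rw [hM (m+2),
      Real.sqrt_div (hKpos (m+3)).le,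
      Real.sqrt_div (mul_nonneg (hNpos (m+3)).le (hKpos (m+3)).le),
      Real.sqrt_mul (hNpos (m+3)).le]
    have key : ∀ (sN2 sN3 s2 s3 : ℝ), 0 < sN2 → 0 < sN3 → 0 < s2 → 0 < s3 →
        1 / sN2 / (1 / (sN3 * s3 / s2)) = 1 / sN2 / (1 / sN3) * (s3 / s2) := by
      intro sN2 sN3 s2 s3 h1 h2 h3 h4
      field_simp
    exact key _ _ _ _ (hsN (m+2)) (hsN (m+2+1)) (hsK (m+2)) (hsK (m+2+1))
  · -- part 3
    have hMe := nrmSq2_eq_eCoef hmom hpos c P hPm hPd hPo1 P2 hP2m hP2d hP2o1 (m+2)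
    have he : eCoef P c (m+2) = nrmSq2 μ c (P2 (m+2)) / nrmSq μ (P (m+2)) := by
      rw [hMe, mul_div_assoc, div_self (hNpos (m+2)).ne', mul_one]
    simp only [rC, r2C]
    rw [he, Real.sqrt_div (hMpos (m+2)).le]
    have key : ∀ a b : ℝ, 0 < a → 0 < b → 1 / a / (1 / b) = b / a := by
      intro a b h1 h2
      field_simp
    exact key _ _ (hsN (m+2)) (hsM (m+2))
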